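/- Let f : ℝ → ℝ be continuously differentiable with f(0) = 0 and f ≥ 0, and suppose f'(ξ) = K²(ξ) for a continuous function K. Then Φ(ξ,η) = J₀(√(η·f(ξ))) satisfies 4·∂²Φ/∂ξ∂η = −K²(ξ)·Φ(ξ,η) for η > 0 and f(ξ) > 0, together with the initial condition Φ(ξ,0) = 1 and Φ(0,η) = 1. -/

import Mathlib

open Real MeasureTheory Filter

/-- Bessel function of the first kind of integer order `n`, via its power series. -/
noncomputable def besselJ (n : ℕ) (x : ℝ) : ℝ :=
  ∑' m : ℕ, (-1 : ℝ) ^ m / ((Nat.factorial m) * (Nat.factorial (m + n))) * (x / 2) ^ (2 * m + n)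

/-- Modified Bessel (MacDonald) function of the second kind of order `ν`,
via its integral representation `K_ν(u) = ∫₀^∞ exp(-u cosh t) cosh(ν t) dt`. -/
noncomputable def besselK (ν : ℝ) (u : ℝ) : ℝ :=
  ∫ t in Set.Ioi (0 : ℝ), Real.exp (-u * Real.cosh t) * Real.cosh (ν * t)

namespace VolkovAux

set_option maxHeartbeats 800000

/-- Summability of a power series with coefficients bounded by `1/m!`. -/
lemma summable_of_bound (b : ℕ → ℝ) (hb : ∀ m, |b m| ≤ 1 / m.factorial) (t : ℝ) :
    Summable (fun m => b m * t ^ m) := by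
  refine Summable.of_norm_bounded
    (Real.summable_pow_div_factorial |t|) ?_
  intro m
  rw [norm_mul, norm_pow, Real.norm_eq_abs, Real.norm_eq_abs]
  calc |b m| * |t| ^ m ≤ (1 / m.factorial) * |t| ^ m :=
        mul_le_mul_of_nonneg_right (hb m) (pow_nonneg (abs_nonneg t) m)
    _ = |t| ^ m / m.factorial := by ring

lemma bound_succ (b : ℕ → ℝ) (hb : ∀ m, |b m| ≤ 1 / m.factorial) (m : ℕ) :
    |((m : ℝ) + 1) * b (m + 1)| ≤ 1 / m.factorial := by
  rw [abs_mul, abs_of_pos (by positivity : (0:ℝ) < (m:ℝ) + 1)]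
  have h := hb (m + 1)
  have h3 : ((m : ℝ) + 1) * |b (m+1)| ≤ ((m:ℝ)+1) * (1 / ((m+1 : ℕ).factorial)) :=
    mul_le_mul_of_nonneg_left h (by positivity)
  refine h3.trans_eq ?_
  rw [Nat.factorial_succ]
  have h2 : ((m.factorial : ℝ)) ≠ 0 := by positivity
  push_cast
  field_simp

/-- Term-by-term differentiation for power series with coefficients bounded by `1/m!`. -/
lemma hasDerivAt_psum (b : ℕ → ℝ) (hb : ∀ m, |b m| ≤ 1 / m.factorial) (t : ℝ) :
    HasDerivAt (fun y => ∑' m, b m * y ^ m)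
      (∑' m : ℕ, ((m : ℝ) + 1) * b (m + 1) * t ^ m) t := by
  set R : ℝ := |t| + 1 with hR
  have hR1 : (1:ℝ) ≤ R := by simp [hR]
  have hRpos : (0:ℝ) < R := lt_of_lt_of_le one_pos hR1
  have hu : Summable (fun m : ℕ => (2 * R) ^ m / m.factorial) :=
    Real.summable_pow_div_factorial (2 * R)
  have hbound : ∀ (n : ℕ) (y : ℝ), y ∈ Metric.ball (0:ℝ) R →
      ‖b n * ((n:ℝ) * y ^ (n - 1))‖ ≤ (2 * R) ^ n / n.factorial := by
    intro n y hy
    have hyR : |y| ≤ R := by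
      have := mem_ball_zero_iff.mp hy
      rw [Real.norm_eq_abs] at this; exact this.le
    rw [Real.norm_eq_abs, abs_mul, abs_mul, abs_pow]
    have h1 : |b n| * (|(n:ℝ)| * |y| ^ (n-1)) ≤ (1 / n.factorial) * ((n:ℝ) * R ^ (n-1)) := by
      apply mul_le_mul (hb n) ?_ (by positivity) (by positivity)
      rw [abs_of_nonneg (by positivity : (0:ℝ) ≤ (n:ℝ))]
      exact mul_le_mul_of_nonneg_left
        (pow_le_pow_left₀ (abs_nonneg y) hyR _) (by positivity)
    refine h1.trans ?_
    have h2 : (n:ℝ) * R^(n-1) ≤ (2*R)^n := by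
      rw [mul_pow]
      have hn : (n:ℝ) ≤ 2^n := by exact_mod_cast (Nat.lt_two_pow_self (n := n)).le
      have hr : R^(n-1) ≤ R^n := pow_le_pow_right₀ hR1 (Nat.sub_le n 1)
      exact mul_le_mul hn hr (by positivity) (by positivity)
    calc (1 / n.factorial : ℝ) * ((n:ℝ) * R ^ (n-1)) ≤ (1 / n.factorial) * (2*R)^n :=
          mul_le_mul_of_nonneg_left h2 (by positivity)
      _ = (2*R)^n / n.factorial := by ring
  have hderiv : ∀ (n : ℕ) (y : ℝ), y ∈ Metric.ball (0:ℝ) R →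
      HasDerivAt (fun z => b n * z ^ n) (b n * ((n:ℝ) * y ^ (n-1))) y := by
    intro n y _
    exact (hasDerivAt_pow n y).const_mul (b n)
  have key : HasDerivAt (fun y => ∑' m, b m * y ^ m)
      (∑' m, b m * ((m:ℝ) * t ^ (m - 1))) t :=
    hasDerivAt_tsum_of_isPreconnected hu Metric.isOpen_ball
      (convex_ball (0:ℝ) R).isPreconnected hderiv hbound
      (by simp [mem_ball_zero_iff, hR] : t ∈ Metric.ball (0:ℝ) R)
      (summable_of_bound b hb t)
      (by simp [mem_ball_zero_iff, hR] : t ∈ Metric.ball (0:ℝ) R)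
  have hsum' : Summable (fun m => b m * ((m:ℝ) * t ^ (m - 1))) := by
    refine Summable.of_norm_bounded hu ?_
    intro n
    exact hbound n t (by simp [mem_ball_zero_iff, hR])
  have heq : (∑' m, b m * ((m:ℝ) * t ^ (m - 1)))
      = ∑' m : ℕ, ((m : ℝ) + 1) * b (m + 1) * t ^ m := by
    rw [Summable.tsum_eq_zero_add hsum']
    simp only [Nat.cast_zero, zero_mul, mul_zero, zero_add, Nat.add_sub_cancel]
    apply tsum_congr
    intro m
    push_cast
    ring
  exact heq ▸ key

/-- Coefficients of `J₀(√t)` as a power series in `t`. -/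
noncomputable def aCoef (m : ℕ) : ℝ := (-1) ^ m / ((m.factorial : ℝ) ^ 2 * 4 ^ m)

noncomputable def a1 (m : ℕ) : ℝ := ((m : ℝ) + 1) * aCoef (m + 1)

noncomputable def a2 (m : ℕ) : ℝ := ((m : ℝ) + 1) * a1 (m + 1)

lemma aCoef_bound (m : ℕ) : |aCoef m| ≤ 1 / m.factorial := by
  unfold aCoef
  rw [abs_div, abs_pow, abs_neg, abs_one, one_pow]
  rw [abs_of_pos (by positivity : (0:ℝ) < (m.factorial : ℝ)^2 * 4^m)]
  apply one_div_le_one_div_of_le (by positivity)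
  have h1 : (1:ℝ) ≤ (m.factorial : ℝ) := by exact_mod_cast m.factorial_pos
  have h2 : (1:ℝ) ≤ (4:ℝ) ^ m := one_le_pow₀ (by norm_num)
  nlinarith

lemma a1_bound (m : ℕ) : |a1 m| ≤ 1 / m.factorial := bound_succ aCoef aCoef_bound m

lemma a2_bound (m : ℕ) : |a2 m| ≤ 1 / m.factorial := bound_succ a1 a1_bound m

lemma aCoef_zero : aCoef 0 = 1 := by simp [aCoef]

lemma aCoef_rec (k : ℕ) : aCoef (k + 1) = -aCoef k / (4 * ((k : ℝ) + 1) ^ 2) := by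
  unfold aCoef
  rw [Nat.factorial_succ, pow_succ, pow_succ]
  have h1 : ((k.factorial : ℝ)) ≠ 0 := by positivity
  have h2 : ((k:ℝ) + 1) ≠ 0 := by positivity
  push_cast
  field_simp
  ring

/-- `G t = J₀(√t)` for `t ≥ 0`, as an entire power series. -/
noncomputable def G (t : ℝ) : ℝ := ∑' m : ℕ, aCoef m * t ^ m

noncomputable def G1 (t : ℝ) : ℝ := ∑' m : ℕ, a1 m * t ^ m

noncomputable def G2 (t : ℝ) : ℝ := ∑' m : ℕ, a2 m * t ^ m

lemma hasDerivAt_G (t : ℝ) : HasDerivAt G (G1 t) t :=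
  hasDerivAt_psum aCoef aCoef_bound t

lemma hasDerivAt_G1 (t : ℝ) : HasDerivAt G1 (G2 t) t :=
  hasDerivAt_psum a1 a1_bound t

lemma coeff_id (m : ℕ) : aCoef (m + 1) + 4 * a1 (m + 1) = -4 * a2 m := by
  unfold a2 a1
  have h := aCoef_rec (m + 1)
  push_cast at h ⊢
  rw [h]
  have hne : ((m:ℝ) + 1 + 1) ≠ 0 := by positivity
  field_simp
  ring

/-- The Bessel ODE in the variable `t = (x/2)²`: `4(G' + t G'') = -G`. -/
lemma ode (u : ℝ) : 4 * (G1 u + u * G2 u) = -(G u) := by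
  have s0 := summable_of_bound aCoef aCoef_bound u
  have s1 := summable_of_bound a1 a1_bound u
  have s2 := summable_of_bound a2 a2_bound u
  have key : G u + 4 * G1 u = (-4 * u) * G2 u := by
    unfold G G1 G2
    rw [← tsum_mul_left (a := (4:ℝ)), ← Summable.tsum_add s0 (s1.mul_left 4),
      Summable.tsum_eq_zero_add (s0.add (s1.mul_left 4)), ← tsum_mul_left (a := -4 * u)]
    have h0 : aCoef 0 * u ^ 0 + 4 * (a1 0 * u ^ 0) = 0 := by
      norm_num [aCoef, a1]
    rw [h0, zero_add]
    apply tsum_congr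
    intro m
    linear_combination (u ^ (m + 1)) * coeff_id m
  linarith

lemma besselJ_sqrt (s : ℝ) (hs : 0 ≤ s) : besselJ 0 (Real.sqrt s) = G s := by
  unfold besselJ G
  apply tsum_congr
  intro m
  have h1 : (Real.sqrt s / 2) ^ (2 * m + 0) = s ^ m / 4 ^ m := by
    rw [add_zero, pow_mul, div_pow, Real.sq_sqrt hs]
    norm_num
    rw [div_pow]
  rw [h1]
  unfold aCoef
  have h2 : ((m.factorial : ℝ)) ≠ 0 := by positivity
  have h3 : ((4:ℝ)) ^ m ≠ 0 := by positivity
  simp only [add_zero]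
  rw [sq]
  push_cast
  field_simp

lemma G_zero : G 0 = 1 := by
  unfold G
  rw [tsum_eq_single 0 (fun m hm => by simp [zero_pow hm])]
  simp [aCoef_zero]

end VolkovAux

open VolkovAux
theorem volkov_operator_identity (f K : ℝ → ℝ) (hf : ContDiff ℝ 1 f) (hf0 : f 0 = 0)
    (hfpos : ∀ ξ, 0 ≤ f ξ) (hK : Continuous K) (hfK : ∀ ξ, deriv f ξ = (K ξ) ^ 2) :
    (∀ ξ η : ℝ, 0 < η → 0 < f ξ →
        4 * deriv (fun ξ' => deriv (fun η' => besselJ 0 (Real.sqrt (η' * f ξ'))) η) ξ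
          = -(K ξ) ^ 2 * besselJ 0 (Real.sqrt (η * f ξ))) ∧
    (∀ ξ : ℝ, besselJ 0 (Real.sqrt ((0 : ℝ) * f ξ)) = 1) ∧
    (∀ η : ℝ, besselJ 0 (Real.sqrt (η * f 0)) = 1) := by
  refine ⟨?_, ?_, ?_⟩
  · intro ξ η hη hfξ
    -- Step 1: the inner derivative equals `f ξ' * G1 (η * f ξ')` for every ξ'.
    have hinner : ∀ ξ' : ℝ,
        deriv (fun η' => besselJ 0 (Real.sqrt (η' * f ξ'))) η = f ξ' * G1 (η * f ξ') := by
      intro ξ'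
      have hG : HasDerivAt (fun η' : ℝ => G (η' * f ξ')) (G1 (η * f ξ') * f ξ') η :=
        by have := (hasDerivAt_G (η * f ξ')).comp η (hasDerivAt_mul_const (f ξ')); exact this
      have heq : (fun η' => besselJ 0 (Real.sqrt (η' * f ξ')))
          =ᶠ[nhds η] (fun η' : ℝ => G (η' * f ξ')) := by
        filter_upwards [isOpen_Ioi.mem_nhds (Set.mem_Ioi.mpr hη)] with η' hη'
        exact besselJ_sqrt _ (mul_nonneg (le_of_lt hη') (hfpos ξ'))
      rw [heq.deriv_eq, hG.deriv]
      ring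
    have hrw : (fun ξ' => deriv (fun η' => besselJ 0 (Real.sqrt (η' * f ξ'))) η)
        = fun ξ' => f ξ' * G1 (η * f ξ') := funext hinner
    rw [hrw]
    -- Step 2: differentiate in ξ.
    have hfd : HasDerivAt f (K ξ ^ 2) ξ := by
      have := (hf.differentiable one_ne_zero ξ).hasDerivAt
      rwa [hfK ξ] at this
    have hcomp : HasDerivAt (fun ξ' => G1 (η * f ξ')) (G2 (η * f ξ) * (η * K ξ ^ 2)) ξ :=
      by have := (hasDerivAt_G1 (η * f ξ)).comp ξ (hfd.const_mul η); exact this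
    have hprod : HasDerivAt (fun ξ' => f ξ' * G1 (η * f ξ'))
        (K ξ ^ 2 * G1 (η * f ξ) + f ξ * (G2 (η * f ξ) * (η * K ξ ^ 2))) ξ :=
      hfd.mul hcomp
    rw [hprod.deriv]
    rw [besselJ_sqrt _ (mul_nonneg hη.le (hfpos ξ))]
    have hode := ode (η * f ξ)
    linear_combination (K ξ ^ 2) * hode
  · intro ξ
    rw [zero_mul, besselJ_sqrt 0 le_rfl, G_zero]
  · intro η
    rw [hf0, mul_zero, besselJ_sqrt 0 le_rfl, G_zero]
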